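/- arXiv:1902.01525 — 2 statements merged into one kernel-verified Lean document; each statement's English description precedes it below -/
import Mathlib

section
/- Let (S, Σ) be a measurable space, {μ_n} a sequence of measures converging setwise to a finite measure μ, and {f_n} a sequence of measurable extended-real-valued functions on S. If {f_n} converges to a measurable real-valued function f in measure μ and {f_n} is asymptotically uniformly integrable with respect to {μ_n}, then lim_{n→∞} ∫_S f_n(s) μ_n(ds) = ∫_S f(s) μ(ds). -/
open MeasureTheory Filter Metric Topology
open scoped ENNReal

/-- The positive part of an extended real, as a value in `ℝ≥0∞`. -/
noncomputable def EReal.posENN (x : EReal) : ℝ≥0∞ := (max x 0).abs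

/-- The negative part of an extended real, as a value in `ℝ≥0∞`. -/
noncomputable def EReal.negENN (x : EReal) : ℝ≥0∞ := (max (-x) 0).abs

/-- The integral of an extended-real-valued function: `∫ f⁺ dμ − ∫ f⁻ dμ` (in `EReal`). -/
noncomputable def eIntegral {S : Type*} [MeasurableSpace S]
    (μ : Measure S) (f : S → EReal) : EReal :=
  ((∫⁻ s, (f s).posENN ∂μ : ℝ≥0∞) : EReal) - ((∫⁻ s, (f s).negENN ∂μ : ℝ≥0∞) : EReal)

/-- The integral of `f` w.r.t. `μ` is defined: at least one of `∫ f⁺ dμ`, `∫ f⁻ dμ` is finite. -/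
def IntegralDefined {S : Type*} [MeasurableSpace S] (μ : Measure S) (f : S → EReal) : Prop :=
  (∫⁻ s, (f s).posENN ∂μ) ≠ ⊤ ∨ (∫⁻ s, (f s).negENN ∂μ) ≠ ⊤

/-- The integral `∫_S |f(s)| 1{|f(s)| ≥ K} μ(ds)`. -/
noncomputable def tailIntegral {S : Type*} [MeasurableSpace S]
    (μ : Measure S) (f : S → EReal) (K : ℝ) : ℝ≥0∞ :=
  ∫⁻ s in {s | (K : EReal) ≤ (f s).abs}, (f s).abs ∂μ

/-- `{f_n}` is asymptotically uniformly integrable w.r.t. `{μ_n}`. -/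
def AUI {S : Type*} [MeasurableSpace S] (μ : ℕ → Measure S) (f : ℕ → S → EReal) : Prop :=
  Tendsto (fun K : ℝ => limsup (fun n => tailIntegral (μ n) (f n) K) atTop) atTop (𝓝 0)

/-- `{μ_n}` converges setwise to `μ`: `μ_n(C) → μ(C)` for every measurable set `C`. -/
def SetwiseConv {S : Type*} [MeasurableSpace S] (μ : ℕ → Measure S) (ν : Measure S) : Prop :=
  ∀ C : Set S, MeasurableSet C → Tendsto (fun n => μ n C) atTop (𝓝 (ν C))

/-- `{f_n}` converges to `f` in measure `μ`: `μ({s : |f_n(s) − f(s)| ≥ ε}) → 0` for all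
`ε > 0`. -/
def ConvInMeasureE {S : Type*} [MeasurableSpace S]
    (f : ℕ → S → EReal) (g : S → ℝ) (μ : Measure S) : Prop :=
  ∀ ε : ℝ, 0 < ε →
    Tendsto (fun n => μ {s | ENNReal.ofReal ε ≤ (f n s - ((g s : ℝ) : EReal)).abs})
      atTop (𝓝 0)

namespace ErealAux


lemma measurable_ereal_abs : Measurable EReal.abs :=
  EReal.measurable_of_measurable_real (by
    simpa [EReal.abs_def, Function.comp_def] using ENNReal.measurable_ofReal.comp continuous_abs.measurable)

lemma measurable_posENN : Measurable EReal.posENN :=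
  measurable_ereal_abs.comp (measurable_id.max measurable_const)

lemma negENN_eq (x : EReal) : x.negENN = (-x).posENN := rfl

lemma posENN_coe (r : ℝ) : ((r : ℝ) : EReal).posENN = ENNReal.ofReal (max r 0) := by
  have h : (max (r : EReal) 0) = ((max r 0 : ℝ) : EReal) := by
    rw [(EReal.coe_strictMono.monotone).map_max]; rfl
  rw [EReal.posENN, h, EReal.abs_def, abs_of_nonneg (le_max_right r 0)]

lemma posENN_coe_ne_top (r : ℝ) : ((r : ℝ) : EReal).posENN ≠ ⊤ := by
  rw [posENN_coe]; exact ENNReal.ofReal_ne_top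

lemma negENN_coe_eq (r : ℝ) : ((r : ℝ) : EReal).negENN = ((-r : ℝ) : EReal).posENN := by
  rw [negENN_eq, ← EReal.coe_neg]

lemma posENN_le_abs (x : EReal) : x.posENN ≤ x.abs := by
  induction x with
  | bot => simp [EReal.posENN, max_eq_right (bot_le : (⊥:EReal) ≤ 0)]
  | coe r =>
      rw [posENN_coe, EReal.abs_def]
      exact ENNReal.ofReal_le_ofReal (max_le (le_abs_self r) (abs_nonneg r))
  | top => simp [EReal.posENN, max_eq_left (le_top : (0:EReal) ≤ ⊤)]

lemma negENN_le_abs (x : EReal) : x.negENN ≤ x.abs := by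
  rw [negENN_eq, ← EReal.abs_neg x]; exact posENN_le_abs _

lemma posENN_le_add (x : EReal) (r : ℝ) :
    x.posENN ≤ ((r : ℝ) : EReal).posENN + (x - (r : ℝ)).abs := by
  induction x with
  | bot =>
      have : ((⊥ : EReal)).posENN = 0 := by simp [EReal.posENN, max_eq_right (bot_le : (⊥:EReal) ≤ 0)]
      rw [this]; exact zero_le
  | coe t =>
      rw [posENN_coe, posENN_coe, ← EReal.coe_sub, EReal.abs_def,
        ← ENNReal.ofReal_add (le_max_right r 0) (abs_nonneg _)]
      exact ENNReal.ofReal_le_ofReal <| by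
          calc max t 0 ≤ max r 0 + |max t 0 - max r 0| := by
                have := le_abs_self (max t 0 - max r 0); linarith
            _ ≤ max r 0 + |t - r| := by
                have := abs_max_sub_max_le_abs t r 0; linarith
  | top =>
      have : ((⊤ : EReal) - (r:ℝ)).abs = ⊤ := by
        rw [EReal.top_sub_coe]; simp
      rw [this, add_top]; exact le_top

lemma coe_posENN_le_add (x : EReal) (r : ℝ) :
    ((r : ℝ) : EReal).posENN ≤ x.posENN + (x - (r : ℝ)).abs := by
  induction x with
  | bot =>
      have : ((⊥ : EReal) - (r:ℝ)).abs = ⊤ := by rw [EReal.bot_sub]; simp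
      rw [this, add_top]; exact le_top
  | coe t =>
      rw [posENN_coe, posENN_coe, ← EReal.coe_sub, EReal.abs_def,
        ← ENNReal.ofReal_add (le_max_right t 0) (abs_nonneg _)]
      exact ENNReal.ofReal_le_ofReal <| by
        calc max r 0 ≤ max t 0 + |max t 0 - max r 0| := by
              have := neg_abs_le (max t 0 - max r 0); linarith
          _ ≤ max t 0 + |t - r| := by
              have := abs_max_sub_max_le_abs t r 0; linarith
  | top =>
      have : ((⊤ : EReal) - (r:ℝ)).abs = ⊤ := by rw [EReal.top_sub_coe]; simp
      rw [this, add_top]; exact le_top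

lemma neg_sub_neg_abs (x : EReal) (r : ℝ) :
    (-x - ((-r : ℝ) : EReal)).abs = (x - (r : ℝ)).abs := by
  induction x with
  | bot => rw [EReal.bot_sub, show -(⊥:EReal) = ⊤ from rfl, EReal.top_sub_coe]; simp
  | coe t =>
      rw [← EReal.coe_neg, ← EReal.coe_sub, ← EReal.coe_sub, EReal.abs_def, EReal.abs_def,
        show -t - -r = -(t - r) by ring, abs_neg]
  | top => rw [EReal.top_sub_coe, show -(⊤:EReal) = ⊥ from rfl, EReal.bot_sub]; simp

lemma abs_sub_coe_eq (x : EReal) (r : ℝ) :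
    (x - (r : ℝ)).abs =
      if x = ⊤ ∨ x = ⊥ then ⊤ else ENNReal.ofReal |x.toReal - r| := by
  induction x with
  | bot => rw [EReal.bot_sub]; simp
  | coe t => rw [← EReal.coe_sub, EReal.abs_def]; simp
  | top => rw [EReal.top_sub_coe]; simp



lemma liminf_lintegral_setwise {S : Type*} [MeasurableSpace S]
    (μ : ℕ → Measure S) (ν : Measure S) (hsw : SetwiseConv μ ν)
    (w : S → ℝ≥0∞) (K : ℝ≥0∞) (hK : K ≠ ⊤) (hwK : ∀ s, w s ≤ K) :
    (∫⁻ s, w s ∂ν) ≤ liminf (fun n => ∫⁻ s, w s ∂ μ n) atTop := by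
  rw [MeasureTheory.lintegral_def]
  refine iSup₂_le fun φ hφ => ?_
  have ht : Tendsto (fun n => φ.lintegral (μ n)) atTop (𝓝 (φ.lintegral ν)) := by
    simp only [SimpleFunc.lintegral]
    refine tendsto_finset_sum _ fun x hx => ?_
    refine ENNReal.Tendsto.const_mul (hsw _ (φ.measurableSet_fiber x)) (Or.inr ?_)
    obtain ⟨s, rfl⟩ := SimpleFunc.mem_range.1 hx
    exact (((hφ s).trans (hwK s)).trans_lt hK.lt_top).ne
  calc φ.lintegral ν = liminf (fun n => φ.lintegral (μ n)) atTop := ht.liminf_eq.symm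
    _ ≤ liminf (fun n => ∫⁻ s, w s ∂ μ n) atTop := by
        refine liminf_le_liminf (Eventually.of_forall fun n => ?_)
        rw [← SimpleFunc.lintegral_eq_lintegral]
        exact lintegral_mono hφ

lemma lintegral_tendsto_setwise_bounded {S : Type*} [MeasurableSpace S]
    (μ : ℕ → Measure S) (ν : Measure S) [IsFiniteMeasure ν] (hsw : SetwiseConv μ ν)
    (w : S → ℝ≥0∞) (hw : Measurable w) (K : ℝ≥0∞) (hK : K ≠ ⊤) (hwK : ∀ s, w s ≤ K) :
    Tendsto (fun n => ∫⁻ s, w s ∂ μ n) atTop (𝓝 (∫⁻ s, w s ∂ν)) := by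
  have hliminf := liminf_lintegral_setwise μ ν hsw w K hK hwK
  refine tendsto_of_le_liminf_of_limsup_le hliminf ?_
  set u := fun n => ∫⁻ s, w s ∂ μ n with hu
  set v := fun n => ∫⁻ s, (K - w s) ∂ μ n with hv
  set A := ∫⁻ s, w s ∂ν with hA
  set B := ∫⁻ s, (K - w s) ∂ν with hB
  have hid : ∀ ρ : Measure S, (∫⁻ s, w s ∂ρ) + (∫⁻ s, (K - w s) ∂ρ) = K * ρ Set.univ := by
    intro ρ
    rw [← lintegral_add_left hw]
    have hptw : (fun s => w s + (K - w s)) = fun _ => K := by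
      funext s; exact add_tsub_cancel_of_le (hwK s)
    rw [hptw, lintegral_const]
  have hVle : ∀ ρ : Measure S, (∫⁻ s, (K - w s) ∂ρ) ≤ K * ρ Set.univ := fun ρ =>
    (le_add_self).trans (hid ρ).le
  have hKν : A + B = K * ν Set.univ := hid ν
  have hABne : A + B ≠ ⊤ := hKν ▸ ENNReal.mul_ne_top hK (measure_ne_top ν Set.univ)
  have hAne : A ≠ ⊤ := fun h => hABne (by simp [h])
  have hBne : B ≠ ⊤ := fun h => hABne (by simp [h])
  refine ENNReal.le_of_forall_pos_le_add fun ε hε _ => ?_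
  set δ := (ε : ℝ≥0∞) / 2 with hδ
  have hε0 : (ε : ℝ≥0∞) ≠ 0 := by exact_mod_cast hε.ne'
  have hδ0 : δ ≠ 0 := by simp [hδ, ENNReal.div_eq_zero_iff, hε0]
  have hδt : δ ≠ ⊤ := by simp [hδ, ENNReal.div_eq_top]
  -- eventual bound on K * μ n univ
  have htend : Tendsto (fun n => K * μ n Set.univ) atTop (𝓝 (K * ν Set.univ)) :=
    ENNReal.Tendsto.const_mul (hsw _ MeasurableSet.univ) (Or.inr hK)
  have ev1 : ∀ᶠ n in atTop, K * μ n Set.univ ≤ K * ν Set.univ + δ :=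
    htend.eventually_le_const
      (ENNReal.lt_add_right (ENNReal.mul_ne_top hK (measure_ne_top ν _)) hδ0)
  have ev2 : ∀ᶠ n in atTop, B ≤ v n + δ := by
    by_cases hb : B ≤ δ
    · exact Eventually.of_forall fun n => hb.trans (le_add_left le_rfl)
    · push_neg at hb
      have hlt : B - δ < liminf v atTop := by
        refine lt_of_lt_of_le ?_ (liminf_lintegral_setwise μ ν hsw _ K hK fun s => tsub_le_self)
        exact ENNReal.sub_lt_self hBne (((zero_le : (0:ℝ≥0∞) ≤ δ).trans_lt hb).ne') hδ0
      filter_upwards [eventually_lt_of_lt_liminf hlt] with n hn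
      calc B = (B - δ) + δ := (tsub_add_cancel_of_le hb.le).symm
        _ ≤ v n + δ := add_le_add_left hn.le _
  have ev3 : ∀ᶠ n in atTop, u n ≤ A + ε := by
    filter_upwards [ev1, ev2] with n h1 h2
    have hvne : v n ≠ ⊤ :=
      ne_top_of_le_ne_top (by simp [hδt, ENNReal.mul_ne_top hK (measure_ne_top ν Set.univ)] :
        K * ν Set.univ + δ ≠ ⊤) ((hVle (μ n)).trans h1)
    have key : u n + v n ≤ (A + ε) + v n := by
      calc u n + v n = K * μ n Set.univ := hid (μ n)
        _ ≤ K * ν Set.univ + δ := h1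
        _ = (A + B) + δ := by rw [hKν]
        _ ≤ (A + (v n + δ)) + δ := by gcongr
        _ = (A + (δ + δ)) + v n := by ring
        _ = (A + ε) + v n := by rw [hδ, ENNReal.add_halves]
    exact (ENNReal.add_le_add_iff_right hvne).1 key
  exact limsup_le_of_le (by isBoundedDefault) ev3


lemma egorov_lite {S : Type*} [MeasurableSpace S] (ν : Measure S) [IsFiniteMeasure ν]
    (u : ℕ → S → ℝ≥0∞) (hu : ∀ n, Measurable (u n)) (v : S → ℝ≥0∞) (hv : Measurable v)
    (hvt : ∀ s, v s ≠ ⊤)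
    (hae : ∀ᵐ s ∂ν, Tendsto (fun n => u n s) atTop (𝓝 (v s)))
    (ε δ : ℝ≥0∞) (hε : 0 < ε) (hδ : 0 < δ) :
    ∃ B : Set S, MeasurableSet B ∧ ν Bᶜ ≤ δ ∧
      ∃ N : ℕ, ∀ n ≥ N, ∀ s ∈ B, u n s ≤ v s + ε ∧ v s ≤ u n s + ε := by
  set G : ℕ → Set S := fun N =>
    ⋂ (n : ℕ), ⋂ (_ : N ≤ n), ({s | u n s ≤ v s + ε} ∩ {s | v s ≤ u n s + ε}) with hG
  have hGmeas : ∀ N, MeasurableSet (G N) := fun N =>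
    MeasurableSet.iInter fun n => MeasurableSet.iInter fun _ =>
      (measurableSet_le (hu n) (hv.add measurable_const)).inter
        (measurableSet_le hv ((hu n).add measurable_const))
  have hGanti : Antitone fun N => (G N)ᶜ := by
    intro N N' hNN'
    refine Set.compl_subset_compl.2 fun s hs => ?_
    simp only [hG, Set.mem_iInter] at hs ⊢
    exact fun n hn => hs n (hNN'.trans hn)
  have hnull : ν (⋂ N, (G N)ᶜ) = 0 := by
    refine measure_mono_null (fun s hs => ?_) (ae_iff.1 hae)
    simp only [Set.mem_iInter, Set.mem_compl_iff, Set.mem_setOf_eq] at hs ⊢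
    intro htends
    have := ((ENNReal.tendsto_nhds (hvt s)).1 htends) ε hε
    obtain ⟨N, hN⟩ := eventually_atTop.1 this
    refine hs N ?_
    simp only [hG, Set.mem_iInter, Set.mem_inter_iff, Set.mem_setOf_eq]
    intro n hn
    obtain ⟨h1, h2⟩ := Set.mem_Icc.1 (hN n hn)
    exact ⟨h2, tsub_le_iff_right.1 h1⟩
  have htend : Tendsto (fun N => ν ((G N)ᶜ)) atTop (𝓝 0) := by
    have := tendsto_measure_iInter_atTop (μ := ν)
      (fun N => ((hGmeas N).compl).nullMeasurableSet) hGanti ⟨0, measure_ne_top ν _⟩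
    rwa [hnull] at this
  obtain ⟨N, hN⟩ := eventually_atTop.1 (htend.eventually_le_const hδ)
  refine ⟨G N, hGmeas N, hN N le_rfl, N, fun n hn s hs => ?_⟩
  simp only [hG, Set.mem_iInter, Set.mem_inter_iff, Set.mem_setOf_eq] at hs
  exact hs n hn


section BDD
variable {S : Type*} [MeasurableSpace S]

lemma bdd_conv (μ : ℕ → Measure S) (ν : Measure S) [IsFiniteMeasure ν] (hsw : SetwiseConv μ ν)
    (M : ℝ≥0∞) (hM : M ≠ ⊤) (hMb : ∀ᶠ n in atTop, μ n Set.univ ≤ M)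
    (u : ℕ → S → ℝ≥0∞) (hu : ∀ n, Measurable (u n)) (v : S → ℝ≥0∞) (hv : Measurable v)
    (K : ℝ≥0∞) (hK : K ≠ ⊤) (huK : ∀ n s, u n s ≤ K) (hvK : ∀ s, v s ≤ K)
    (hae : ∀ᵐ s ∂ν, Tendsto (fun n => u n s) atTop (𝓝 (v s))) :
    Tendsto (fun n => ∫⁻ s, u n s ∂ μ n) atTop (𝓝 (∫⁻ s, v s ∂ν)) := by
  set Lv := ∫⁻ s, v s ∂ν with hLv
  have hLvne : Lv ≠ ⊤ := by
    refine ne_top_of_le_ne_top (ENNReal.mul_ne_top hK (measure_ne_top ν Set.univ)) ?_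
    calc Lv ≤ ∫⁻ _, K ∂ν := lintegral_mono hvK
      _ = K * ν Set.univ := lintegral_const K
  rw [ENNReal.tendsto_nhds hLvne]
  intro ε hε
  rcases eq_or_ne ε ⊤ with rfl | hεt
  · refine Eventually.of_forall fun n => Set.mem_Icc.2 ⟨?_, ?_⟩
    · simp [tsub_eq_zero_iff_le.2 (le_top : Lv ≤ ⊤)]
    · exact le_top.trans (by simp)
  set c := ε / 8 with hc
  have hc0 : c ≠ 0 := by simp [hc, ENNReal.div_eq_zero_iff, hε.ne']
  have hct : c ≠ ⊤ := by simp [hc, ENNReal.div_eq_top, hεt]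
  have h4c : c + c + c + c ≤ ε := by
    calc c + c + c + c = 4 * c := by ring
      _ ≤ 8 * c := by gcongr <;> norm_num
      _ = ε := by rw [hc, ENNReal.mul_div_cancel' (by norm_num) (by norm_num)]
  set ε1 := c / (M + 1) with hε1
  set δ := c / (K + 1) with hδ
  have hε10 : ε1 ≠ 0 := by
    simp [hε1, ENNReal.div_eq_zero_iff, hc0, ENNReal.add_eq_top, hM]
  have hδ0 : δ ≠ 0 := by
    simp [hδ, ENNReal.div_eq_zero_iff, hc0, ENNReal.add_eq_top, hK]
  have hδt : δ ≠ ⊤ := by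
    simp [hδ, ENNReal.div_eq_top, hct]
  have hε1M : ε1 * M ≤ c := by
    calc ε1 * M ≤ ε1 * (M + 1) := by gcongr; exact le_self_add
      _ = c := by rw [hε1, ENNReal.div_mul_cancel (by simp) (by simp [ENNReal.add_eq_top, hM])]
  have hKδ : K * δ ≤ c := by
    calc K * δ ≤ (K + 1) * δ := by gcongr; exact le_self_add
      _ = c := by
          rw [hδ, mul_comm, ENNReal.div_mul_cancel (by simp) (by simp [ENNReal.add_eq_top, hK])]
  obtain ⟨B, hB, hνB, N0, hN0⟩ := egorov_lite ν u hu v hv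
    (fun s => ((hvK s).trans_lt hK.lt_top).ne) hae ε1 δ (pos_iff_ne_zero.2 hε10)
    (pos_iff_ne_zero.2 hδ0)
  have hLem1 : Tendsto (fun n => ∫⁻ s, v s ∂ μ n) atTop (𝓝 Lv) :=
    lintegral_tendsto_setwise_bounded μ ν hsw v hv K hK hvK
  have ev_v : ∀ᶠ n in atTop, (∫⁻ s, v s ∂ μ n) ∈ Set.Icc (Lv - c) (Lv + c) :=
    (ENNReal.tendsto_nhds hLvne).1 hLem1 c (pos_iff_ne_zero.2 hc0)
  have ev_Bc : ∀ᶠ n in atTop, μ n Bᶜ ≤ δ + δ := by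
    refine (hsw Bᶜ hB.compl).eventually_le_const ?_
    exact hνB.trans_lt (ENNReal.lt_add_right hδt hδ0)
  filter_upwards [hMb, ev_v, ev_Bc, eventually_ge_atTop N0] with n hm hvn hbc hn
  obtain ⟨hv1, hv2⟩ := Set.mem_Icc.1 hvn
  have hsplit_u : (∫⁻ s, u n s ∂ μ n) =
      (∫⁻ s in B, u n s ∂ μ n) + ∫⁻ s in Bᶜ, u n s ∂ μ n := (lintegral_add_compl _ hB).symm
  have hsplit_v : (∫⁻ s, v s ∂ μ n) =
      (∫⁻ s in B, v s ∂ μ n) + ∫⁻ s in Bᶜ, v s ∂ μ n := (lintegral_add_compl _ hB).symm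
  have hμB : μ n B ≤ M := (measure_mono (Set.subset_univ B)).trans hm
  have hBc_u : (∫⁻ s in Bᶜ, u n s ∂ μ n) ≤ c + c := by
    calc (∫⁻ s in Bᶜ, u n s ∂ μ n) ≤ ∫⁻ _ in Bᶜ, K ∂ μ n :=
          setLIntegral_mono measurable_const fun s _ => huK n s
      _ = K * μ n Bᶜ := setLIntegral_const _ _
      _ ≤ K * (δ + δ) := by gcongr
      _ = K * δ + K * δ := by ring
      _ ≤ c + c := add_le_add hKδ hKδ
  have hBc_v : (∫⁻ s in Bᶜ, v s ∂ μ n) ≤ c + c := by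
    calc (∫⁻ s in Bᶜ, v s ∂ μ n) ≤ ∫⁻ _ in Bᶜ, K ∂ μ n :=
          setLIntegral_mono measurable_const fun s _ => hvK s
      _ = K * μ n Bᶜ := setLIntegral_const _ _
      _ ≤ K * (δ + δ) := by gcongr
      _ = K * δ + K * δ := by ring
      _ ≤ c + c := add_le_add hKδ hKδ
  refine Set.mem_Icc.2 ⟨?_, ?_⟩
  · -- lower bound : Lv - ε ≤ ∫ u n dμ n
    rw [tsub_le_iff_right]
    have hstep : (∫⁻ s in B, v s ∂ μ n) ≤ (∫⁻ s, u n s ∂ μ n) + ε1 * M := by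
      calc (∫⁻ s in B, v s ∂ μ n) ≤ ∫⁻ s in B, (u n s + ε1) ∂ μ n :=
            setLIntegral_mono ((hu n).add measurable_const)
              fun s hs => (hN0 n hn s hs).2
        _ = (∫⁻ s in B, u n s ∂ μ n) + ε1 * μ n B := by
            rw [lintegral_add_right _ measurable_const, setLIntegral_const]
        _ ≤ (∫⁻ s, u n s ∂ μ n) + ε1 * M := by
            gcongr
            exact Measure.restrict_le_self
    calc Lv ≤ (∫⁻ s, v s ∂ μ n) + c := le_tsub_add.trans (add_le_add_left hv1 c)
      _ = ((∫⁻ s in B, v s ∂ μ n) + ∫⁻ s in Bᶜ, v s ∂ μ n) + c := by rw [← hsplit_v]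
      _ ≤ (((∫⁻ s, u n s ∂ μ n) + ε1 * M) + (c + c)) + c := by gcongr
      _ ≤ ((∫⁻ s, u n s ∂ μ n) + c + (c + c)) + c := by gcongr
      _ = (∫⁻ s, u n s ∂ μ n) + (c + c + c + c) := by ring
      _ ≤ (∫⁻ s, u n s ∂ μ n) + ε := by gcongr
  · -- upper bound
    have hstep : (∫⁻ s in B, u n s ∂ μ n) ≤ (∫⁻ s, v s ∂ μ n) + ε1 * M := by
      calc (∫⁻ s in B, u n s ∂ μ n) ≤ ∫⁻ s in B, (v s + ε1) ∂ μ n :=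
            setLIntegral_mono (hv.add measurable_const) fun s hs => (hN0 n hn s hs).1
        _ = (∫⁻ s in B, v s ∂ μ n) + ε1 * μ n B := by
            rw [lintegral_add_right _ measurable_const, setLIntegral_const]
        _ ≤ (∫⁻ s, v s ∂ μ n) + ε1 * M := by
            gcongr
            exact Measure.restrict_le_self
    calc (∫⁻ s, u n s ∂ μ n)
        = (∫⁻ s in B, u n s ∂ μ n) + ∫⁻ s in Bᶜ, u n s ∂ μ n := hsplit_u
      _ ≤ ((∫⁻ s, v s ∂ μ n) + ε1 * M) + (c + c) := by gcongr
      _ ≤ ((Lv + c) + c) + (c + c) := by gcongr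
      _ = Lv + (c + c + c + c) := by ring
      _ ≤ Lv + ε := by gcongr

end BDD


lemma my_limsup_add_le (u v : ℕ → ℝ≥0∞) :
    limsup (fun n => u n + v n) atTop ≤ limsup u atTop + limsup v atTop := by
  by_cases h1 : limsup u atTop = ⊤
  · rw [h1, top_add]; exact le_top
  by_cases h2 : limsup v atTop = ⊤
  · rw [h2, add_top]; exact le_top
  refine ENNReal.le_of_forall_pos_le_add fun ε hε _ => ?_
  have hε2 : ((ε : ℝ≥0∞) / 2) ≠ 0 := by
    simp [ENNReal.div_eq_zero_iff]
    exact_mod_cast hε.ne'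
  have e1 : ∀ᶠ n in atTop, u n < limsup u atTop + (ε : ℝ≥0∞) / 2 :=
    eventually_lt_of_limsup_lt (ENNReal.lt_add_right h1 hε2)
  have e2 : ∀ᶠ n in atTop, v n < limsup v atTop + (ε : ℝ≥0∞) / 2 :=
    eventually_lt_of_limsup_lt (ENNReal.lt_add_right h2 hε2)
  refine limsup_le_of_le (by isBoundedDefault) ?_
  filter_upwards [e1, e2] with n hn1 hn2
  calc u n + v n ≤ (limsup u atTop + (ε : ℝ≥0∞) / 2) + (limsup v atTop + (ε : ℝ≥0∞) / 2) :=
        add_le_add hn1.le hn2.le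
    _ = limsup u atTop + limsup v atTop + ((ε : ℝ≥0∞) / 2 + (ε : ℝ≥0∞) / 2) := by ring
    _ = limsup u atTop + limsup v atTop + ε := by rw [ENNReal.add_halves]

section CoreAE
variable {S : Type*} [MeasurableSpace S]

lemma core_ae (μ : ℕ → Measure S) (ν : Measure S) [IsFiniteMeasure ν] (hsw : SetwiseConv μ ν)
    (h : ℕ → S → ℝ≥0∞) (hh : ∀ n, Measurable (h n))
    (b : S → ℝ≥0∞) (hb : Measurable b) (hbt : ∀ s, b s ≠ ⊤)
    (hae : ∀ᵐ s ∂ν, Tendsto (fun n => h n s) atTop (𝓝 (b s)))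
    (htail : Tendsto (fun K : ℝ =>
        limsup (fun n => ∫⁻ s in {s | ENNReal.ofReal K ≤ h n s}, h n s ∂ μ n) atTop)
      atTop (𝓝 0)) :
    (∫⁻ s, b s ∂ν) ≠ ⊤ ∧
      Tendsto (fun n => ∫⁻ s, h n s ∂ μ n) atTop (𝓝 (∫⁻ s, b s ∂ν)) := by
  set M := ν Set.univ + 1 with hM
  have hMne : M ≠ ⊤ := by simp [hM, ENNReal.add_eq_top, measure_ne_top]
  have hMb : ∀ᶠ n in atTop, μ n Set.univ ≤ M :=
    (hsw _ MeasurableSet.univ).eventually_le_const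
      (ENNReal.lt_add_right (measure_ne_top ν _) one_ne_zero)
  set T := fun (K : ℝ) (n : ℕ) =>
    ∫⁻ s in {s | ENNReal.ofReal K ≤ h n s}, h n s ∂ μ n with hT
  have hBDD : ∀ j : ℕ, Tendsto (fun n => ∫⁻ s, min (h n s) j ∂ μ n) atTop
      (𝓝 (∫⁻ s, min (b s) j ∂ν)) := fun j =>
    bdd_conv μ ν hsw M hMne hMb _ (fun n => (hh n).min measurable_const) _
      (hb.min measurable_const) j (ENNReal.natCast_ne_top j)
      (fun n s => min_le_right _ _) (fun s => min_le_right _ _)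
      (hae.mono fun s hs => hs.min tendsto_const_nhds)
  have hsetm : ∀ (K : ℝ) n, MeasurableSet {s | ENNReal.ofReal K ≤ h n s} :=
    fun K n => measurableSet_le measurable_const (hh n)
  have hsplit : ∀ (K : ℝ) (j : ℕ), ENNReal.ofReal K ≤ (j : ℝ≥0∞) → ∀ n,
      (∫⁻ s, h n s ∂ μ n) ≤ (∫⁻ s, min (h n s) j ∂ μ n) + T K n := by
    intro K j hKj n
    have hple : ∀ s, h n s ≤
        min (h n s) j + {s | ENNReal.ofReal K ≤ h n s}.indicator (h n) s := by
      intro s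
      by_cases hc : ENNReal.ofReal K ≤ h n s
      · have heq : ({s | ENNReal.ofReal K ≤ h n s}.indicator (h n) s) = h n s :=
          Set.indicator_of_mem (show s ∈ {s | ENNReal.ofReal K ≤ h n s} from hc) (h n)
        rw [heq]; exact le_add_self
      · have heq : ({s | ENNReal.ofReal K ≤ h n s}.indicator (h n) s) = 0 :=
          Set.indicator_of_notMem (show s ∉ {s | ENNReal.ofReal K ≤ h n s} from hc) (h n)
        rw [heq, add_zero, min_eq_left ((le_of_lt (not_le.1 hc)).trans hKj)]
    calc (∫⁻ s, h n s ∂ μ n)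
        ≤ ∫⁻ s, (min (h n s) j + {s | ENNReal.ofReal K ≤ h n s}.indicator (h n) s) ∂ μ n :=
          lintegral_mono hple
      _ = (∫⁻ s, min (h n s) j ∂ μ n) +
            ∫⁻ s, {s | ENNReal.ofReal K ≤ h n s}.indicator (h n) s ∂ μ n :=
          lintegral_add_left ((hh n).min measurable_const) _
      _ = (∫⁻ s, min (h n s) j ∂ μ n) + T K n := by
          rw [lintegral_indicator (hsetm K n) (h n)]
  have hbsup : ∀ s, (⨆ j : ℕ, min (b s) (j : ℝ≥0∞)) = b s := by
    intro s
    obtain ⟨j, hj⟩ := ENNReal.exists_nat_gt (hbt s)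
    exact le_antisymm (iSup_le fun _ => min_le_left _ _)
      (le_iSup_of_le j (le_min le_rfl hj.le))
  have hSup : (∫⁻ s, b s ∂ν) = ⨆ j : ℕ, ∫⁻ s, min (b s) j ∂ν := by
    rw [← lintegral_iSup (fun j => hb.min measurable_const)
      (fun i j hij s => min_le_min le_rfl (Nat.cast_le.2 hij))]
    exact lintegral_congr fun s => (hbsup s).symm
  -- finiteness
  obtain ⟨K₀, hK₀⟩ := (htail.eventually_le_const zero_lt_one).exists
  have hjbound : ∀ j : ℕ, (∫⁻ s, min (b s) j ∂ν) ≤ ENNReal.ofReal K₀ * M + 1 := by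
    intro j
    have hle : ∀ᶠ n in atTop,
        (∫⁻ s, min (h n s) j ∂ μ n) ≤ ENNReal.ofReal K₀ * M + T K₀ n := by
      filter_upwards [hMb] with n hm
      have hple : ∀ s, min (h n s) j ≤
          ENNReal.ofReal K₀ + {s | ENNReal.ofReal K₀ ≤ h n s}.indicator (h n) s := by
        intro s
        by_cases hc : ENNReal.ofReal K₀ ≤ h n s
        · rw [Set.indicator_of_mem (show s ∈ {s | ENNReal.ofReal K₀ ≤ h n s} from hc) (h n)]
          exact le_add_left (min_le_left _ _)
        · rw [Set.indicator_of_notMem (show s ∉ {s | ENNReal.ofReal K₀ ≤ h n s} from hc) (h n),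
            add_zero]
          exact (min_le_left _ _).trans (not_le.1 hc).le
      calc (∫⁻ s, min (h n s) j ∂ μ n)
          ≤ ∫⁻ s, (ENNReal.ofReal K₀
              + {s | ENNReal.ofReal K₀ ≤ h n s}.indicator (h n) s) ∂ μ n :=
            lintegral_mono hple
        _ = ENNReal.ofReal K₀ * μ n Set.univ + T K₀ n := by
            rw [lintegral_add_left measurable_const, lintegral_const,
              lintegral_indicator (hsetm K₀ n) (h n)]
        _ ≤ ENNReal.ofReal K₀ * M + T K₀ n := by gcongr
    calc (∫⁻ s, min (b s) j ∂ν)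
        = limsup (fun n => ∫⁻ s, min (h n s) j ∂ μ n) atTop := (hBDD j).limsup_eq.symm
      _ ≤ limsup (fun n => ENNReal.ofReal K₀ * M + T K₀ n) atTop := limsup_le_limsup hle
      _ ≤ limsup (fun _ : ℕ => ENNReal.ofReal K₀ * M) atTop
            + limsup (fun n => T K₀ n) atTop := my_limsup_add_le _ _
      _ = ENNReal.ofReal K₀ * M + limsup (fun n => T K₀ n) atTop := by rw [limsup_const]
      _ ≤ ENNReal.ofReal K₀ * M + 1 := add_le_add_right hK₀ _
  have hbfin : (∫⁻ s, b s ∂ν) ≠ ⊤ := by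
    rw [hSup]
    exact ne_top_of_le_ne_top
      (by simp [ENNReal.add_eq_top, ENNReal.mul_ne_top ENNReal.ofReal_ne_top hMne])
      (iSup_le hjbound)
  refine ⟨hbfin, ?_⟩
  have hinf : (∫⁻ s, b s ∂ν) ≤ liminf (fun n => ∫⁻ s, h n s ∂ μ n) atTop := by
    rw [hSup]
    refine iSup_le fun j => ?_
    calc (∫⁻ s, min (b s) j ∂ν)
        = liminf (fun n => ∫⁻ s, min (h n s) j ∂ μ n) atTop := (hBDD j).liminf_eq.symm
      _ ≤ liminf (fun n => ∫⁻ s, h n s ∂ μ n) atTop :=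
          liminf_le_liminf (Eventually.of_forall fun n =>
            lintegral_mono fun s => min_le_left _ _)
  have hsup' : limsup (fun n => ∫⁻ s, h n s ∂ μ n) atTop ≤ ∫⁻ s, b s ∂ν := by
    refine ENNReal.le_of_forall_pos_le_add fun ε hε _ => ?_
    have hεpos : (0 : ℝ≥0∞) < ε := by exact_mod_cast hε
    obtain ⟨K, hKtail⟩ := (htail.eventually_le_const hεpos).exists
    set j := ⌈K⌉₊ with hj
    have hKj : ENNReal.ofReal K ≤ (j : ℝ≥0∞) := by
      calc ENNReal.ofReal K ≤ ENNReal.ofReal j := ENNReal.ofReal_le_ofReal (Nat.le_ceil K)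
        _ = (j : ℝ≥0∞) := ENNReal.ofReal_natCast j
    calc limsup (fun n => ∫⁻ s, h n s ∂ μ n) atTop
        ≤ limsup (fun n => (∫⁻ s, min (h n s) j ∂ μ n) + T K n) atTop :=
          limsup_le_limsup (Eventually.of_forall (hsplit K j hKj))
      _ ≤ limsup (fun n => ∫⁻ s, min (h n s) j ∂ μ n) atTop
            + limsup (fun n => T K n) atTop := my_limsup_add_le _ _
      _ ≤ (∫⁻ s, min (b s) j ∂ν) + ε := add_le_add (hBDD j).limsup_eq.le hKtail
      _ ≤ (∫⁻ s, b s ∂ν) + ε :=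
          add_le_add_left (lintegral_mono fun s => min_le_left _ _) _
  exact tendsto_of_le_liminf_of_limsup_le hinf hsup'

end CoreAE

section Core
variable {S : Type*} [MeasurableSpace S]

lemma core (μ : ℕ → Measure S) (ν : Measure S) [IsFiniteMeasure ν] (hsw : SetwiseConv μ ν)
    (h : ℕ → S → ℝ≥0∞) (hh : ∀ n, Measurable (h n))
    (b : S → ℝ≥0∞) (hb : Measurable b) (hbt : ∀ s, b s ≠ ⊤)
    (d : ℕ → S → ℝ≥0∞) (hd : ∀ n, Measurable (d n))
    (hd1 : ∀ n s, h n s ≤ b s + d n s) (hd2 : ∀ n s, b s ≤ h n s + d n s)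
    (hdconv : ∀ ε : ℝ, 0 < ε →
      Tendsto (fun n => ν {s | ENNReal.ofReal ε ≤ d n s}) atTop (𝓝 0))
    (htail : Tendsto (fun K : ℝ =>
        limsup (fun n => ∫⁻ s in {s | ENNReal.ofReal K ≤ h n s}, h n s ∂ μ n) atTop)
      atTop (𝓝 0)) :
    (∫⁻ s, b s ∂ν) ≠ ⊤ ∧
      Tendsto (fun n => ∫⁻ s, h n s ∂ μ n) atTop (𝓝 (∫⁻ s, b s ∂ν)) := by
  have hgeo0 : Tendsto (fun k : ℕ => ENNReal.ofReal ((1/2 : ℝ)^k)) atTop (𝓝 0) := by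
    have := ENNReal.tendsto_ofReal
      (tendsto_pow_atTop_nhds_zero_of_lt_one (by norm_num : (0:ℝ) ≤ 1/2) (by norm_num))
    simpa using this
  have key : ∀ ns : ℕ → ℕ, Tendsto ns atTop atTop →
      ∃ φ : ℕ → ℕ, (∫⁻ s, b s ∂ν) ≠ ⊤ ∧
        Tendsto (fun k => ∫⁻ s, h (ns (φ k)) s ∂ μ (ns (φ k))) atTop
          (𝓝 (∫⁻ s, b s ∂ν)) := by
    intro ns hns
    have hP : ∀ k : ℕ, ∀ᶠ j in atTop,
        ν {s | ENNReal.ofReal ((1/2 : ℝ)^k) ≤ d (ns j) s} ≤ ENNReal.ofReal ((1/2 : ℝ)^k) := by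
      intro k
      have hpos : (0:ℝ) < (1/2 : ℝ)^k := by positivity
      exact ((hdconv _ hpos).comp hns).eventually_le_const (ENNReal.ofReal_pos.2 hpos)
    obtain ⟨φ, hφmono, hφ⟩ := Filter.extraction_forall_of_eventually hP
    set m := fun k => ns (φ k) with hmdef
    have hm : Tendsto m atTop atTop := hns.comp hφmono.tendsto_atTop
    set A : ℕ → Set S := fun k => {s | ENNReal.ofReal ((1/2 : ℝ)^k) ≤ d (m k) s} with hA
    have hsum : (∑' k, ν (A k)) ≠ ⊤ := by
      refine ne_top_of_le_ne_top ?_ (ENNReal.tsum_le_tsum fun k => hφ k)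
      have hre : ∀ k : ℕ, ENNReal.ofReal ((1/2 : ℝ)^k) = (ENNReal.ofReal (1/2))^k :=
        fun k => ENNReal.ofReal_pow (by norm_num) k
      simp_rw [hre]
      rw [ENNReal.tsum_geometric]
      rw [Ne, ENNReal.inv_eq_top, tsub_eq_zero_iff_le, not_le]
      exact ENNReal.ofReal_lt_one.2 (by norm_num)
    have hBC : ν (limsup A atTop) = 0 := measure_limsup_atTop_eq_zero hsum
    have hae : ∀ᵐ s ∂ν, Tendsto (fun k => h (m k) s) atTop (𝓝 (b s)) := by
      rw [ae_iff]
      refine measure_mono_null (fun s hs => ?_) hBC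
      simp only [Set.mem_setOf_eq] at hs
      rw [mem_limsup_iff_frequently_mem]
      by_contra hfreq
      refine hs ?_
      have hev : ∀ᶠ k in atTop, d (m k) s < ENNReal.ofReal ((1/2 : ℝ)^k) := by
        have := (not_frequently.1 hfreq)
        filter_upwards [this] with k hk
        simpa [hA, not_le] using hk
      rw [ENNReal.tendsto_nhds (hbt s)]
      intro ε hε
      filter_upwards [hev, hgeo0.eventually_le_const hε] with k hk1 hk2
      have hdk : d (m k) s ≤ ε := hk1.le.trans hk2
      refine Set.mem_Icc.2 ⟨?_, ?_⟩
      · exact tsub_le_iff_right.2 ((hd2 (m k) s).trans (add_le_add_right hdk _))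
      · exact (hd1 (m k) s).trans (add_le_add_right hdk _)
    have hsw' : SetwiseConv (fun k => μ (m k)) ν := fun C hC => (hsw C hC).comp hm
    have htail' : Tendsto (fun K : ℝ =>
        limsup (fun k => ∫⁻ s in {s | ENNReal.ofReal K ≤ h (m k) s}, h (m k) s ∂ μ (m k))
          atTop) atTop (𝓝 0) := by
      have hbd : ∀ K : ℝ,
          limsup (fun k => ∫⁻ s in {s | ENNReal.ofReal K ≤ h (m k) s}, h (m k) s ∂ μ (m k))
            atTop ≤
          limsup (fun n => ∫⁻ s in {s | ENNReal.ofReal K ≤ h n s}, h n s ∂ μ n) atTop := by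
        intro K
        have heq : limsup (fun k =>
            ∫⁻ s in {s | ENNReal.ofReal K ≤ h (m k) s}, h (m k) s ∂ μ (m k)) atTop =
            limsup (fun n => ∫⁻ s in {s | ENNReal.ofReal K ≤ h n s}, h n s ∂ μ n)
              (Filter.map m atTop) := by
          rw [Filter.limsup, Filter.limsup, Filter.map_map]; rfl
        rw [heq]
        exact limsup_le_limsup_of_le hm
      exact tendsto_of_tendsto_of_tendsto_of_le_of_le tendsto_const_nhds htail
        (fun K => zero_le) hbd
    obtain ⟨hfin, htd⟩ := core_ae (fun k => μ (m k)) ν hsw' (fun k => h (m k))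
      (fun k => hh (m k)) b hb hbt hae htail'
    exact ⟨φ, hfin, htd⟩
  obtain ⟨_, hfin, _⟩ := key id tendsto_id
  refine ⟨hfin, tendsto_of_subseq_tendsto fun ns hns => ?_⟩
  obtain ⟨φ, _, htd⟩ := key ns hns
  exact ⟨φ, htd⟩

end Core

lemma measurable_ereal_negENN : Measurable EReal.negENN :=
  measurable_ereal_abs.comp ((continuous_neg.measurable).max measurable_const)

lemma negENN_le_add (x : EReal) (r : ℝ) :
    x.negENN ≤ ((r : ℝ) : EReal).negENN + (x - (r : ℝ)).abs := by
  rw [negENN_eq x, negENN_coe_eq r, ← neg_sub_neg_abs x r]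
  exact posENN_le_add (-x) (-r)

lemma coe_negENN_le_add (x : EReal) (r : ℝ) :
    ((r : ℝ) : EReal).negENN ≤ x.negENN + (x - (r : ℝ)).abs := by
  rw [negENN_eq x, negENN_coe_eq r, ← neg_sub_neg_abs x r]
  exact coe_posENN_le_add (-x) (-r)

lemma ofReal_le_of_ereal_le {x : EReal} {K : ℝ} (hK : ENNReal.ofReal K ≤ x.abs) :
    (K : EReal) ≤ (x.abs : EReal) := by
  calc (K : EReal) ≤ ((ENNReal.ofReal K : ℝ≥0∞) : EReal) := by
        rw [EReal.coe_ennreal_ofReal]; exact le_max_left (K : EReal) 0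
    _ ≤ (x.abs : EReal) := EReal.coe_ennreal_le_coe_ennreal_iff.2 hK

end ErealAux

open ErealAux in
theorem lebesgue_setwise' {S : Type*} [MeasurableSpace S]
    (μ : ℕ → Measure S) (ν : Measure S) [IsFiniteMeasure ν] (hsw : SetwiseConv μ ν)
    (f : ℕ → S → EReal) (hf : ∀ n, Measurable (f n))
    (g : S → ℝ) (hg : Measurable g)
    (hconv : ∀ ε : ℝ, 0 < ε →
      Tendsto (fun n => ν {s | ENNReal.ofReal ε ≤ (f n s - ((g s : ℝ) : EReal)).abs})
        atTop (𝓝 0))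
    (haui : Tendsto (fun K : ℝ =>
        limsup (fun n => ∫⁻ s in {s | (K : EReal) ≤ ((f n s).abs : EReal)}, (f n s).abs ∂ μ n)
          atTop) atTop (𝓝 0)) :
    Tendsto (fun n =>
        (((∫⁻ s, (f n s).posENN ∂ μ n : ℝ≥0∞) : EReal)
          - ((∫⁻ s, (f n s).negENN ∂ μ n : ℝ≥0∞) : EReal)))
      atTop
      (𝓝 (((∫⁻ s, ((g s : ℝ) : EReal).posENN ∂ν : ℝ≥0∞) : EReal)
          - ((∫⁻ s, ((g s : ℝ) : EReal).negENN ∂ν : ℝ≥0∞) : EReal))) := by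
  -- measurability of the distance function
  have hdmeas : ∀ n, Measurable fun s => (f n s - ((g s : ℝ) : EReal)).abs := by
    intro n
    have heq : (fun s => (f n s - ((g s : ℝ) : EReal)).abs) = fun s =>
        if f n s = ⊤ ∨ f n s = ⊥ then (⊤ : ℝ≥0∞)
        else ENNReal.ofReal |(f n s).toReal - g s| := by
      funext s; exact abs_sub_coe_eq (f n s) (g s)
    rw [heq]
    refine Measurable.ite ?_ measurable_const ?_
    · have : {s | f n s = ⊤ ∨ f n s = ⊥} = (f n) ⁻¹' {⊤} ∪ (f n) ⁻¹' {⊥} := by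
        ext s; simp [Set.mem_union, Set.mem_preimage]
      rw [this]
      exact ((hf n) (measurableSet_singleton ⊤)).union ((hf n) (measurableSet_singleton ⊥))
    · exact ENNReal.measurable_ofReal.comp
        ((_root_.continuous_abs : Continuous fun t : ℝ => |t|).measurable.comp ((hf n).ereal_toReal.sub hg))
  -- the tail condition transfers to pos/neg parts
  have htail_transfer : ∀ (p : EReal → ℝ≥0∞), (∀ x, p x ≤ x.abs) →
      Tendsto (fun K : ℝ =>
        limsup (fun n => ∫⁻ s in {s | ENNReal.ofReal K ≤ p (f n s)}, p (f n s) ∂ μ n)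
          atTop) atTop (𝓝 0) := by
    intro p hp
    have hbd : ∀ K : ℝ, ∀ n,
        (∫⁻ s in {s | ENNReal.ofReal K ≤ p (f n s)}, p (f n s) ∂ μ n) ≤
        ∫⁻ s in {s | (K : EReal) ≤ ((f n s).abs : EReal)}, (f n s).abs ∂ μ n := by
      intro K n
      calc (∫⁻ s in {s | ENNReal.ofReal K ≤ p (f n s)}, p (f n s) ∂ μ n)
          ≤ ∫⁻ s in {s | ENNReal.ofReal K ≤ p (f n s)}, (f n s).abs ∂ μ n :=
            lintegral_mono fun s => hp (f n s)
        _ ≤ ∫⁻ s in {s | (K : EReal) ≤ ((f n s).abs : EReal)}, (f n s).abs ∂ μ n := by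
            refine lintegral_mono_set fun s hs => ?_
            exact ofReal_le_of_ereal_le ((hp (f n s)).trans' hs)
    refine tendsto_of_tendsto_of_tendsto_of_le_of_le tendsto_const_nhds haui
      (fun K => zero_le) (fun K => limsup_le_limsup (Eventually.of_forall (hbd K)))
  -- positive part
  have hP := core μ ν hsw (fun n s => (f n s).posENN)
    (fun n => measurable_posENN.comp (hf n))
    (fun s => ((g s : ℝ) : EReal).posENN)
    (measurable_posENN.comp (measurable_coe_real_ereal.comp hg))
    (fun s => posENN_coe_ne_top (g s))
    (fun n s => (f n s - ((g s : ℝ) : EReal)).abs) hdmeas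
    (fun n s => posENN_le_add (f n s) (g s))
    (fun n s => coe_posENN_le_add (f n s) (g s))
    hconv (htail_transfer EReal.posENN posENN_le_abs)
  -- negative part
  have hN := core μ ν hsw (fun n s => (f n s).negENN)
    (fun n => measurable_ereal_negENN.comp (hf n))
    (fun s => ((g s : ℝ) : EReal).negENN)
    (measurable_ereal_negENN.comp (measurable_coe_real_ereal.comp hg))
    (fun s => by
      show ((g s : ℝ) : EReal).negENN ≠ ⊤
      rw [negENN_coe_eq]; exact posENN_coe_ne_top _)
    (fun n s => (f n s - ((g s : ℝ) : EReal)).abs) hdmeas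
    (fun n s => negENN_le_add (f n s) (g s))
    (fun n s => coe_negENN_le_add (f n s) (g s))
    hconv (htail_transfer EReal.negENN negENN_le_abs)
  obtain ⟨hPfin, hPtd⟩ := hP
  obtain ⟨hNfin, hNtd⟩ := hN
  set Pg := ∫⁻ s, ((g s : ℝ) : EReal).posENN ∂ν with hPg
  set Ng := ∫⁻ s, ((g s : ℝ) : EReal).negENN ∂ν with hNg
  have hpair : Tendsto (fun n =>
      (((∫⁻ s, (f n s).posENN ∂ μ n : ℝ≥0∞) : EReal),
       ((∫⁻ s, (f n s).negENN ∂ μ n : ℝ≥0∞) : EReal))) atTop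
      (𝓝 ((Pg : EReal), (Ng : EReal))) :=
    ((continuous_coe_ennreal_ereal.tendsto Pg).comp hPtd).prodMk_nhds
      ((continuous_coe_ennreal_ereal.tendsto Ng).comp hNtd)
  have hcont : ContinuousAt (fun p : EReal × EReal => p.1 - p.2) ((Pg : EReal), (Ng : EReal)) := by
    have hsub : (fun p : EReal × EReal => p.1 - p.2) =
        (fun q : EReal × EReal => q.1 + q.2) ∘ (fun p : EReal × EReal => (p.1, -p.2)) := rfl
    rw [hsub]
    refine ContinuousAt.comp ?_ ?_
    · refine EReal.continuousAt_add ?_ ?_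
      · left; simpa using hPfin
      · left; exact EReal.coe_ennreal_ne_bot Pg
    · exact (continuous_fst.prodMk (continuous_neg.comp continuous_snd)).continuousAt
  exact hcont.tendsto.comp hpair



/-- Lebesgue's convergence theorem for setwise converging measures (Corollary 5.3). -/
theorem lebesgue_setwise {S : Type*} [MeasurableSpace S]
    (μ : ℕ → Measure S) (ν : Measure S) [IsFiniteMeasure ν] (hsw : SetwiseConv μ ν)
    (f : ℕ → S → EReal) (hf : ∀ n, Measurable (f n))
    (g : S → ℝ) (hg : Measurable g)
    (hconv : ConvInMeasureE f g ν)
    (haui : AUI μ f) :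
    Tendsto (fun n => eIntegral (μ n) (f n)) atTop
      (𝓝 (eIntegral ν (fun s => ((g s : ℝ) : EReal)))) := by
  exact lebesgue_setwise' μ ν hsw f hf g hg hconv haui
end

section
/- Let (S, Σ) be a measurable space, {μ_n} a sequence of measures converging setwise to a finite measure μ, and {f_n} a pointwise nondecreasing sequence of measurable extended-real-valued functions on S; define f(s) := lim_{n→∞} f_n(s). If the functions f_1^- and f^+ are asymptotically uniformly integrable with respect to {μ_n}, then lim_{n→∞} ∫_S f_n(s) μ_n(ds) = ∫_S f(s) μ(ds). -/
open MeasureTheory Filter Metric Topology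
open scoped ENNReal

/-! ### Auxiliary lemmas -/

section AuxEReal

lemma EReal.coe_abs_of_nonneg {x : EReal} (hx : 0 ≤ x) : (x.abs : EReal) = x := by
  induction x with
  | bot => exact absurd hx (by simp)
  | coe r =>
      rw [EReal.abs_def, EReal.coe_ennreal_ofReal]
      have hr : 0 ≤ r := by exact_mod_cast hx
      rw [abs_of_nonneg hr, max_eq_left hr]
  | top => simp

lemma EReal.coe_posENN (x : EReal) : (x.posENN : EReal) = max x 0 :=
  EReal.coe_abs_of_nonneg (le_max_right _ _)

lemma EReal.coe_negENN (x : EReal) : (x.negENN : EReal) = max (-x) 0 :=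
  EReal.coe_abs_of_nonneg (le_max_right _ _)

lemma EReal.posENN_mono : Monotone EReal.posENN := fun x y h => by
  rw [← EReal.coe_ennreal_le_coe_ennreal_iff, EReal.coe_posENN, EReal.coe_posENN]
  exact max_le_max h le_rfl

lemma EReal.negENN_anti : Antitone EReal.negENN := fun x y h => by
  rw [← EReal.coe_ennreal_le_coe_ennreal_iff, EReal.coe_negENN, EReal.coe_negENN]
  exact max_le_max (EReal.neg_le_neg_iff.mpr h) le_rfl

lemma EReal.continuous_posENN : Continuous EReal.posENN := by
  rw [← continuous_coe_ennreal_iff]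
  have : (fun x : EReal => ((x.posENN : EReal))) = fun x => max x 0 := funext EReal.coe_posENN
  rw [this]
  exact continuous_id.max continuous_const

lemma EReal.continuous_negENN : Continuous EReal.negENN :=
  EReal.continuous_posENN.comp continuous_neg

lemma EReal.measurable_posENN : Measurable EReal.posENN := EReal.continuous_posENN.measurable

lemma EReal.measurable_negENN : Measurable EReal.negENN := EReal.continuous_negENN.measurable

end AuxEReal

section AuxLimsup

lemma ennreal_limsup_add_liminf_le (u v : ℕ → ℝ≥0∞) :
    atTop.limsup u + atTop.liminf v ≤ atTop.limsup (fun n => u n + v n) := by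
  rcases eq_or_ne (atTop.limsup u) 0 with ha | ha
  · rw [ha, zero_add]
    exact (liminf_le_liminf (Eventually.of_forall fun n => (le_add_self :
      v n ≤ u n + v n))).trans liminf_le_limsup
  rcases eq_or_ne (atTop.liminf v) 0 with hb | hb
  · rw [hb, add_zero]
    exact limsup_le_limsup (Eventually.of_forall fun n => (le_self_add : u n ≤ u n + v n))
  refine le_of_forall_lt_imp_le_of_dense fun d hd => ?_
  obtain ⟨a', ha', b', hb', hd'⟩ := ENNReal.exists_lt_add_of_lt_add hd ha hb
  have hfreq : ∃ᶠ n in atTop, d ≤ u n + v n := by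
    refine ((frequently_lt_of_lt_limsup (by isBoundedDefault) ha').and_eventually
      (eventually_lt_of_lt_liminf hb')).mono fun n hn => ?_
    exact (hd'.trans_le (add_le_add hn.1.le hn.2.le)).le
  exact le_limsup_of_frequently_le hfreq

lemma ennreal_limsup_add_le (u v : ℕ → ℝ≥0∞) :
    atTop.limsup (fun n => u n + v n) ≤ atTop.limsup u + atTop.limsup v := by
  rcases eq_or_ne (atTop.limsup u) ⊤ with ha | ha
  · rw [ha, top_add]; exact le_top
  rcases eq_or_ne (atTop.limsup v) ⊤ with hb | hb
  · rw [hb, add_top]; exact le_top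
  refine ENNReal.le_of_forall_pos_le_add fun ε hε _ => ?_
  have h1 : ∀ᶠ n in atTop, u n < atTop.limsup u + (ε : ℝ≥0∞) / 2 :=
    eventually_lt_of_limsup_lt (ENNReal.lt_add_right ha (by simpa using hε.ne'))
  have h2 : ∀ᶠ n in atTop, v n < atTop.limsup v + (ε : ℝ≥0∞) / 2 :=
    eventually_lt_of_limsup_lt (ENNReal.lt_add_right hb (by simpa using hε.ne'))
  calc atTop.limsup (fun n => u n + v n)
      ≤ (atTop.limsup u + (ε : ℝ≥0∞) / 2) + (atTop.limsup v + (ε : ℝ≥0∞) / 2) := by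
        refine limsup_le_of_le (by isBoundedDefault) ?_
        filter_upwards [h1, h2] with n hn1 hn2
        exact add_le_add hn1.le hn2.le
    _ = atTop.limsup u + atTop.limsup v + (ε : ℝ≥0∞) := by
        rw [add_add_add_comm, ENNReal.add_halves]

lemma ennreal_eq_iSup_min_nat (a : ℝ≥0∞) : a = ⨆ c : ℕ, min a (c : ℝ≥0∞) := by
  refine le_antisymm ?_ (iSup_le fun c => min_le_left _ _)
  rcases eq_or_ne a ⊤ with ha | ha
  · rw [ha]
    calc (⊤ : ℝ≥0∞) = ⨆ c : ℕ, (c : ℝ≥0∞) := ENNReal.iSup_natCast.symm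
      _ ≤ ⨆ c : ℕ, min (⊤ : ℝ≥0∞) (c : ℝ≥0∞) := by
          exact iSup_mono fun c => le_min le_top le_rfl
  · obtain ⟨c, hc⟩ := ENNReal.exists_nat_gt (lt_top_iff_ne_top.2 ha).ne
    refine le_trans ?_ (le_iSup _ c)
    rw [min_eq_left hc.le]

end AuxLimsup

section AuxSetwise

variable {S : Type*} [MeasurableSpace S] {μ : ℕ → Measure S} {ν : Measure S}

lemma setwise_simpleFunc (hsw : SetwiseConv μ ν) (φ : SimpleFunc S NNReal) :
    Tendsto (fun n => ∫⁻ s, (φ s : ℝ≥0∞) ∂μ n) atTop (𝓝 (∫⁻ s, (φ s : ℝ≥0∞) ∂ν)) := by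
  induction φ using SimpleFunc.induction with
  | const c hs =>
      rename_i s
      have key : ∀ m : Measure S,
          ∫⁻ x, (((SimpleFunc.piecewise s hs (SimpleFunc.const S c) (SimpleFunc.const S 0)) x :
            NNReal) : ℝ≥0∞) ∂m = (c : ℝ≥0∞) * m s := by
        intro m
        have heq : (fun x => (((SimpleFunc.piecewise s hs (SimpleFunc.const S c)
            (SimpleFunc.const S 0)) x : NNReal) : ℝ≥0∞)) = s.indicator (fun _ => (c : ℝ≥0∞)) := by
          funext x
          by_cases hx : x ∈ s <;>
            simp [SimpleFunc.piecewise_apply, hx, Set.indicator_apply]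
        rw [heq, lintegral_indicator hs, setLIntegral_const]
      simp only [key]
      exact ENNReal.Tendsto.const_mul (hsw s hs) (Or.inr ENNReal.coe_ne_top)
  | add hdis hf hg =>
      rename_i f g
      have hmf : Measurable fun x => ((f x : NNReal) : ℝ≥0∞) := f.measurable.coe_nnreal_ennreal
      have key : ∀ m : Measure S, ∫⁻ s, (((f + g) s : NNReal) : ℝ≥0∞) ∂m =
          (∫⁻ s, ((f s : NNReal) : ℝ≥0∞) ∂m) + ∫⁻ s, ((g s : NNReal) : ℝ≥0∞) ∂m := by
        intro m
        rw [← lintegral_add_left hmf]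
        congr 1
      simp only [key]
      exact hf.add hg

lemma nu_lintegral_le_liminf (hsw : SetwiseConv μ ν) {w : S → ℝ≥0∞} (_hw : Measurable w) :
    ∫⁻ s, w s ∂ν ≤ atTop.liminf (fun n => ∫⁻ s, w s ∂μ n) := by
  rw [lintegral_eq_nnreal w ν]
  refine iSup₂_le fun φ hφ => ?_
  have hrepr : ∀ m : Measure S, (φ.map ((↑) : NNReal → ℝ≥0∞)).lintegral m
      = ∫⁻ s, ((φ s : NNReal) : ℝ≥0∞) ∂m := by
    intro m
    rw [← SimpleFunc.lintegral_eq_lintegral]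
    simp [SimpleFunc.coe_map]
  rw [hrepr]
  have h1 := setwise_simpleFunc hsw φ
  rw [← h1.liminf_eq]
  exact liminf_le_liminf (Eventually.of_forall fun n => lintegral_mono fun s => hφ s)

lemma tendsto_lintegral_setwise_bounded (hsw : SetwiseConv μ ν) [IsFiniteMeasure ν]
    {w : S → ℝ≥0∞} (hw : Measurable w) {C : ℝ≥0∞} (hC : C ≠ ⊤) (hb : ∀ s, w s ≤ C) :
    Tendsto (fun n => ∫⁻ s, w s ∂μ n) atTop (𝓝 (∫⁻ s, w s ∂ν)) := by
  have hw' : Measurable fun s => C - w s := measurable_const.sub hw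
  have hsum : ∀ m : Measure S, (∫⁻ s, w s ∂m) + (∫⁻ s, (C - w s) ∂m) = C * m Set.univ := by
    intro m
    rw [← lintegral_add_left hw]
    simp_rw [fun s => add_tsub_cancel_of_le (hb s)]
    exact lintegral_const C
  have hCν : Tendsto (fun n => C * μ n Set.univ) atTop (𝓝 (C * ν Set.univ)) :=
    ENNReal.Tendsto.const_mul (hsw Set.univ MeasurableSet.univ) (Or.inr hC)
  have hfin : C * ν Set.univ ≠ ⊤ := ENNReal.mul_ne_top hC (measure_ne_top ν _)
  refine tendsto_of_le_liminf_of_limsup_le (nu_lintegral_le_liminf hsw hw) ?_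
  have key : atTop.limsup (fun n => ∫⁻ s, w s ∂μ n) + ∫⁻ s, (C - w s) ∂ν ≤
      (∫⁻ s, w s ∂ν) + ∫⁻ s, (C - w s) ∂ν := by
    calc atTop.limsup (fun n => ∫⁻ s, w s ∂μ n) + ∫⁻ s, (C - w s) ∂ν
        ≤ atTop.limsup (fun n => ∫⁻ s, w s ∂μ n) +
            atTop.liminf (fun n => ∫⁻ s, (C - w s) ∂μ n) := by
          gcongr
          exact nu_lintegral_le_liminf hsw hw'
      _ ≤ atTop.limsup (fun n => (∫⁻ s, w s ∂μ n) + ∫⁻ s, (C - w s) ∂μ n) :=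
          ennreal_limsup_add_liminf_le _ _
      _ = atTop.limsup (fun n => C * μ n Set.univ) := by simp_rw [hsum]
      _ = C * ν Set.univ := hCν.limsup_eq
      _ = (∫⁻ s, w s ∂ν) + ∫⁻ s, (C - w s) ∂ν := (hsum ν).symm
  have hfin2 : ∫⁻ s, (C - w s) ∂ν ≠ ⊤ := by
    refine ne_top_of_le_ne_top hfin ?_
    rw [← hsum ν]; exact le_add_self
  exact ENNReal.le_of_add_le_add_right hfin2 key

lemma lintegral_le_trunc_add_tail (m : Measure S) {w : S → ℝ≥0∞} (hw : Measurable w)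
    (K : ℝ≥0∞) :
    ∫⁻ s, w s ∂m ≤ (∫⁻ s, min (w s) K ∂m) + ∫⁻ s in {s | K ≤ w s}, w s ∂m := by
  have hset : MeasurableSet {s | K ≤ w s} := measurableSet_le measurable_const hw
  rw [← lintegral_indicator hset]
  rw [← lintegral_add_left (hw.min measurable_const)]
  refine lintegral_mono fun s => ?_
  simp only [Set.indicator_apply, Set.mem_setOf_eq]
  by_cases h : K ≤ w s
  · rw [if_pos h]
    exact le_add_self
  · rw [if_neg h, add_zero, min_eq_left (le_of_not_ge h)]

lemma tail_antitone (m : Measure S) {w w' : S → ℝ≥0∞} (hw : Measurable w) (hw' : Measurable w')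
    (h : ∀ s, w' s ≤ w s) (K : ℝ≥0∞) :
    ∫⁻ s in {s | K ≤ w' s}, w' s ∂m ≤ ∫⁻ s in {s | K ≤ w s}, w s ∂m := by
  have h1 : MeasurableSet {s | K ≤ w' s} := measurableSet_le measurable_const hw'
  rw [← lintegral_indicator h1]
  calc ∫⁻ s, {s | K ≤ w' s}.indicator w' s ∂m
      ≤ ∫⁻ s, {s | K ≤ w s}.indicator w s ∂m := by
        refine lintegral_mono fun s => ?_
        simp only [Set.indicator_apply, Set.mem_setOf_eq]
        by_cases hs : K ≤ w' s
        · rw [if_pos hs, if_pos (hs.trans (h s))]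
          exact h s
        · rw [if_neg hs]
          exact zero_le
    _ = ∫⁻ s in {s | K ≤ w s}, w s ∂m := by
        rw [lintegral_indicator (measurableSet_le measurable_const hw)]

lemma tailIntegral_eq_pos (m : Measure S) (g : S → EReal) {K : ℝ} (hK : 0 ≤ K) :
    tailIntegral m (fun s => max (g s) 0) K
      = ∫⁻ s in {s | ENNReal.ofReal K ≤ (g s).posENN}, (g s).posENN ∂m := by
  have hco : ((K : ℝ) : EReal) = ((ENNReal.ofReal K : ℝ≥0∞) : EReal) := by
    rw [EReal.coe_ennreal_ofReal, max_eq_left hK]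
  unfold tailIntegral
  have hset : {s | ((K : ℝ) : EReal) ≤ ((max (g s) 0).abs : EReal)}
      = {s | ENNReal.ofReal K ≤ (g s).posENN} := by
    ext s
    simp only [Set.mem_setOf_eq, hco, EReal.coe_ennreal_le_coe_ennreal_iff]
    rfl
  rw [hset]
  rfl

end AuxSetwise

/-- Monotone convergence theorem for setwise converging measures (Corollary 6.2). -/
theorem monotone_convergence_setwise {S : Type*} [MeasurableSpace S]
    (μ : ℕ → Measure S) (ν : Measure S) [IsFiniteMeasure ν] (hsw : SetwiseConv μ ν)
    (f : ℕ → S → EReal) (hf : ∀ n, Measurable (f n))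
    (hmono : ∀ n s, f n s ≤ f (n + 1) s)
    (g : S → EReal) (hlim : ∀ s, Tendsto (fun n => f n s) atTop (𝓝 (g s)))
    (haui₁ : AUI μ (fun _ s => max (-(f 0 s)) 0))
    (haui₂ : AUI μ (fun _ s => max (g s) 0)) :
    Tendsto (fun n => eIntegral (μ n) (f n)) atTop (𝓝 (eIntegral ν g)) := by
  classical
  have hg : Measurable g :=
    measurable_of_tendsto_metrizable' atTop hf (tendsto_pi_nhds.2 hlim)
  set p : ℕ → S → ℝ≥0∞ := fun n s => (f n s).posENN with hp_def
  set q : ℕ → S → ℝ≥0∞ := fun n s => (f n s).negENN with hq_def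
  set pg : S → ℝ≥0∞ := fun s => (g s).posENN with hpg_def
  set qg : S → ℝ≥0∞ := fun s => (g s).negENN with hqg_def
  have hmp : ∀ n, Measurable (p n) := fun n => EReal.measurable_posENN.comp (hf n)
  have hmq : ∀ n, Measurable (q n) := fun n => EReal.measurable_negENN.comp (hf n)
  have hmpg : Measurable pg := EReal.measurable_posENN.comp hg
  have hmqg : Measurable qg := EReal.measurable_negENN.comp hg
  have hfmono : ∀ s, Monotone fun n => f n s :=
    fun s => monotone_nat_of_le_succ fun n => hmono n s
  have hfg : ∀ n s, f n s ≤ g s := fun n s => (hfmono s).ge_of_tendsto (hlim s) n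
  have hpmono : ∀ s, Monotone fun n => p n s := fun s _ _ h => EReal.posENN_mono (hfmono s h)
  have hqanti : ∀ s, Antitone fun n => q n s := fun s _ _ h => EReal.negENN_anti (hfmono s h)
  have hplim : ∀ s, Tendsto (fun n => p n s) atTop (𝓝 (pg s)) :=
    fun s => (EReal.continuous_posENN.tendsto _).comp (hlim s)
  have hqlim : ∀ s, Tendsto (fun n => q n s) atTop (𝓝 (qg s)) :=
    fun s => (EReal.continuous_negENN.tendsto _).comp (hlim s)
  have hpsup : ∀ s, pg s = ⨆ n, p n s :=
    fun s => tendsto_nhds_unique (hplim s) (tendsto_atTop_iSup (hpmono s))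
  have hqinf : ∀ s, qg s = ⨅ n, q n s :=
    fun s => tendsto_nhds_unique (hqlim s) (tendsto_atTop_iInf (hqanti s))
  have hple : ∀ n s, p n s ≤ pg s := fun n s => EReal.posENN_mono (hfg n s)
  have hqle : ∀ n s, qg s ≤ q n s := fun n s => EReal.negENN_anti (hfg n s)
  -- the sequences of upper/lower integrals
  set P : ℕ → ℝ≥0∞ := fun n => ∫⁻ s, p n s ∂μ n with hP_def
  set N : ℕ → ℝ≥0∞ := fun n => ∫⁻ s, q n s ∂μ n with hN_def
  -- identify the tail integrals
  have htail₂ : ∀ n, ∀ K : ℝ, 0 ≤ K → tailIntegral (μ n) (fun s => max (g s) 0) K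
      = ∫⁻ s in {s | ENNReal.ofReal K ≤ pg s}, pg s ∂μ n :=
    fun n K hK => tailIntegral_eq_pos (μ n) g hK
  have htail₁ : ∀ n, ∀ K : ℝ, 0 ≤ K → tailIntegral (μ n) (fun s => max (-(f 0 s)) 0) K
      = ∫⁻ s in {s | ENNReal.ofReal K ≤ q 0 s}, q 0 s ∂μ n :=
    fun n K hK => tailIntegral_eq_pos (μ n) (fun s => -(f 0 s)) hK
  -- Step 0 : ∫ q 0 dν < ∞
  have haux₁ : Tendsto (fun K : ℝ =>
      atTop.limsup fun n => ∫⁻ s in {s | ENNReal.ofReal K ≤ q 0 s}, q 0 s ∂μ n) atTop (𝓝 0) := by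
    have haui₁' := haui₁
    unfold AUI at haui₁'
    refine haui₁'.congr' ?_
    filter_upwards [eventually_ge_atTop (0 : ℝ)] with K hK
    simp_rw [htail₁ _ K hK]
  have haux₂ : Tendsto (fun K : ℝ =>
      atTop.limsup fun n => ∫⁻ s in {s | ENNReal.ofReal K ≤ pg s}, pg s ∂μ n) atTop (𝓝 0) := by
    have haui₂' := haui₂
    unfold AUI at haui₂'
    refine haui₂'.congr' ?_
    filter_upwards [eventually_ge_atTop (0 : ℝ)] with K hK
    simp_rw [htail₂ _ K hK]
  have hq0fin : ∫⁻ s, q 0 s ∂ν ≠ ⊤ := by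
    obtain ⟨K₀, hK₀, hK₀lt⟩ : ∃ K₀ : ℝ, 0 ≤ K₀ ∧
        (atTop.limsup fun n => ∫⁻ s in {s | ENNReal.ofReal K₀ ≤ q 0 s}, q 0 s ∂μ n) < 1 := by
      have := (haux₁.eventually_lt_const (zero_lt_one)).and (eventually_ge_atTop (0 : ℝ))
      obtain ⟨K₀, h1, h2⟩ := this.exists
      exact ⟨K₀, h2, h1⟩
    have hev1 : ∀ᶠ n in atTop,
        (∫⁻ s in {s | ENNReal.ofReal K₀ ≤ q 0 s}, q 0 s ∂μ n) < 1 :=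
      eventually_lt_of_limsup_lt hK₀lt
    have hev2 : ∀ᶠ n in atTop, μ n Set.univ < ν Set.univ + 1 :=
      (hsw Set.univ MeasurableSet.univ).eventually_lt_const
        (ENNReal.lt_add_right (measure_ne_top ν _) one_ne_zero)
    set M : ℝ≥0∞ := ENNReal.ofReal K₀ * (ν Set.univ + 1) + 1 with hM_def
    have hMfin : M ≠ ⊤ := by
      refine ENNReal.add_ne_top.2 ⟨ENNReal.mul_ne_top ENNReal.ofReal_ne_top ?_, ENNReal.one_ne_top⟩
      exact ENNReal.add_ne_top.2 ⟨measure_ne_top ν _, ENNReal.one_ne_top⟩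
    have hev : ∀ᶠ n in atTop, (∫⁻ s, q 0 s ∂μ n) ≤ M := by
      filter_upwards [hev1, hev2] with n h1 h2
      calc ∫⁻ s, q 0 s ∂μ n
          ≤ (∫⁻ s, min (q 0 s) (ENNReal.ofReal K₀) ∂μ n)
            + ∫⁻ s in {s | ENNReal.ofReal K₀ ≤ q 0 s}, q 0 s ∂μ n :=
            lintegral_le_trunc_add_tail (μ n) (hmq 0) _
        _ ≤ ENNReal.ofReal K₀ * μ n Set.univ + 1 := by
            refine add_le_add ?_ h1.le
            calc ∫⁻ s, min (q 0 s) (ENNReal.ofReal K₀) ∂μ n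
                ≤ ∫⁻ _, ENNReal.ofReal K₀ ∂μ n := lintegral_mono fun s => min_le_right _ _
              _ = ENNReal.ofReal K₀ * μ n Set.univ := lintegral_const _
        _ ≤ M := by
            rw [hM_def]
            exact add_le_add (mul_le_mul_right h2.le _) le_rfl
    refine ne_top_of_le_ne_top hMfin ?_
    refine (nu_lintegral_le_liminf hsw (hmq 0)).trans ?_
    exact (liminf_le_liminf hev).trans (liminf_const M).le
  have hqgfin : ∫⁻ s, qg s ∂ν ≠ ⊤ :=
    ne_top_of_le_ne_top hq0fin (lintegral_mono fun s => hqle 0 s)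
  -- convergence of the negative parts: N → ∫ qg dν
  have hNlimsup : atTop.limsup N ≤ ∫⁻ s, qg s ∂ν := by
    have hstep : ∀ m : ℕ, atTop.limsup N ≤ ∫⁻ s, q m s ∂ν := by
      intro m
      have key : ∀ K : ℝ, 0 ≤ K → atTop.limsup N ≤ (∫⁻ s, q m s ∂ν) +
          atTop.limsup (fun n => ∫⁻ s in {s | ENNReal.ofReal K ≤ q 0 s}, q 0 s ∂μ n) := by
        intro K hK
        have hbnd : ∀ᶠ n in atTop, N n ≤ (∫⁻ s, min (q m s) (ENNReal.ofReal K) ∂μ n)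
            + ∫⁻ s in {s | ENNReal.ofReal K ≤ q 0 s}, q 0 s ∂μ n := by
          filter_upwards [eventually_ge_atTop m] with n hn
          calc N n ≤ ∫⁻ s, q m s ∂μ n := lintegral_mono fun s => hqanti s hn
            _ ≤ (∫⁻ s, min (q m s) (ENNReal.ofReal K) ∂μ n)
                + ∫⁻ s in {s | ENNReal.ofReal K ≤ q m s}, q m s ∂μ n :=
                lintegral_le_trunc_add_tail (μ n) (hmq m) _
            _ ≤ (∫⁻ s, min (q m s) (ENNReal.ofReal K) ∂μ n)
                + ∫⁻ s in {s | ENNReal.ofReal K ≤ q 0 s}, q 0 s ∂μ n :=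
                add_le_add le_rfl (tail_antitone (μ n) (hmq 0) (hmq m)
                  (fun s => hqanti s (Nat.zero_le m)) _)
        have hconv : Tendsto (fun n => ∫⁻ s, min (q m s) (ENNReal.ofReal K) ∂μ n) atTop
            (𝓝 (∫⁻ s, min (q m s) (ENNReal.ofReal K) ∂ν)) :=
          tendsto_lintegral_setwise_bounded hsw ((hmq m).min measurable_const)
            ENNReal.ofReal_ne_top (fun s => min_le_right _ _)
        calc atTop.limsup N
            ≤ atTop.limsup (fun n => (∫⁻ s, min (q m s) (ENNReal.ofReal K) ∂μ n)
              + ∫⁻ s in {s | ENNReal.ofReal K ≤ q 0 s}, q 0 s ∂μ n) :=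
              limsup_le_limsup hbnd
          _ ≤ atTop.limsup (fun n => ∫⁻ s, min (q m s) (ENNReal.ofReal K) ∂μ n)
              + atTop.limsup (fun n => ∫⁻ s in {s | ENNReal.ofReal K ≤ q 0 s}, q 0 s ∂μ n) :=
              ennreal_limsup_add_le _ _
          _ ≤ (∫⁻ s, q m s ∂ν)
              + atTop.limsup (fun n => ∫⁻ s in {s | ENNReal.ofReal K ≤ q 0 s}, q 0 s ∂μ n) := by
              gcongr
              rw [hconv.limsup_eq]
              exact lintegral_mono fun s => min_le_left _ _
      -- let K → ∞
      have htendsto : Tendsto (fun K : ℝ => (∫⁻ s, q m s ∂ν) +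
          atTop.limsup (fun n => ∫⁻ s in {s | ENNReal.ofReal K ≤ q 0 s}, q 0 s ∂μ n)) atTop
          (𝓝 ((∫⁻ s, q m s ∂ν) + 0)) := tendsto_const_nhds.add haux₁
      rw [add_zero] at htendsto
      refine ge_of_tendsto htendsto ?_
      filter_upwards [eventually_ge_atTop (0 : ℝ)] with K hK
      exact key K hK
    have hiInf : ∫⁻ s, qg s ∂ν = ⨅ m, ∫⁻ s, q m s ∂ν := by
      have : ∫⁻ s, qg s ∂ν = ∫⁻ s, ⨅ m, q m s ∂ν := by
        congr 1; funext s; exact hqinf s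
      rw [this]
      exact lintegral_iInf hmq (fun _ _ h => fun s => hqanti s h) hq0fin
    rw [hiInf]
    exact le_iInf hstep
  have hNliminf : ∫⁻ s, qg s ∂ν ≤ atTop.liminf N := by
    have hstep : ∀ c : ℕ, (∫⁻ s, min (qg s) (c : ℝ≥0∞) ∂ν) ≤ atTop.liminf N := by
      intro c
      have hconv : Tendsto (fun n => ∫⁻ s, min (qg s) (c : ℝ≥0∞) ∂μ n) atTop
          (𝓝 (∫⁻ s, min (qg s) (c : ℝ≥0∞) ∂ν)) :=
        tendsto_lintegral_setwise_bounded hsw (hmqg.min measurable_const)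
          (ENNReal.natCast_ne_top c) (fun s => min_le_right _ _)
      rw [← hconv.liminf_eq]
      refine liminf_le_liminf (Eventually.of_forall fun n => ?_)
      exact lintegral_mono fun s => (min_le_left _ _).trans (hqle n s)
    have hsup : ∫⁻ s, qg s ∂ν = ⨆ c : ℕ, ∫⁻ s, min (qg s) (c : ℝ≥0∞) ∂ν := by
      rw [← lintegral_iSup (fun c => hmqg.min measurable_const)
        (fun c c' h => fun s => min_le_min le_rfl (by exact_mod_cast Nat.cast_le.2 h))]
      congr 1; funext s
      exact ennreal_eq_iSup_min_nat _
    rw [hsup]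
    exact iSup_le hstep
  -- convergence of the positive parts: P → ∫ pg dν
  have hPliminf : ∫⁻ s, pg s ∂ν ≤ atTop.liminf P := by
    have hstep : ∀ m : ℕ, (∫⁻ s, p m s ∂ν) ≤ atTop.liminf P := by
      intro m
      have hstepc : ∀ c : ℕ, (∫⁻ s, min (p m s) (c : ℝ≥0∞) ∂ν) ≤ atTop.liminf P := by
        intro c
        have hconv : Tendsto (fun n => ∫⁻ s, min (p m s) (c : ℝ≥0∞) ∂μ n) atTop
            (𝓝 (∫⁻ s, min (p m s) (c : ℝ≥0∞) ∂ν)) :=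
          tendsto_lintegral_setwise_bounded hsw ((hmp m).min measurable_const)
            (ENNReal.natCast_ne_top c) (fun s => min_le_right _ _)
        rw [← hconv.liminf_eq]
        refine liminf_le_liminf ?_
        filter_upwards [eventually_ge_atTop m] with n hn
        exact lintegral_mono fun s => (min_le_left _ _).trans (hpmono s hn)
      have hsup : ∫⁻ s, p m s ∂ν = ⨆ c : ℕ, ∫⁻ s, min (p m s) (c : ℝ≥0∞) ∂ν := by
        rw [← lintegral_iSup (fun c => (hmp m).min measurable_const)
          (fun c c' h => fun s => min_le_min le_rfl (by exact_mod_cast Nat.cast_le.2 h))]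
        congr 1; funext s
        exact ennreal_eq_iSup_min_nat _
      rw [hsup]
      exact iSup_le hstepc
    have hsup2 : ∫⁻ s, pg s ∂ν = ⨆ m, ∫⁻ s, p m s ∂ν := by
      rw [← lintegral_iSup hmp (fun m m' h => fun s => hpmono s h)]
      congr 1; funext s; exact hpsup s
    rw [hsup2]
    exact iSup_le hstep
  have hPlimsup : atTop.limsup P ≤ ∫⁻ s, pg s ∂ν := by
    have key : ∀ K : ℝ, 0 ≤ K → atTop.limsup P ≤ (∫⁻ s, pg s ∂ν) +
        atTop.limsup (fun n => ∫⁻ s in {s | ENNReal.ofReal K ≤ pg s}, pg s ∂μ n) := by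
      intro K hK
      have hbnd : ∀ n, P n ≤ (∫⁻ s, min (pg s) (ENNReal.ofReal K) ∂μ n)
          + ∫⁻ s in {s | ENNReal.ofReal K ≤ pg s}, pg s ∂μ n := by
        intro n
        calc P n ≤ ∫⁻ s, pg s ∂μ n := lintegral_mono fun s => hple n s
          _ ≤ _ := lintegral_le_trunc_add_tail (μ n) hmpg _
      have hconv : Tendsto (fun n => ∫⁻ s, min (pg s) (ENNReal.ofReal K) ∂μ n) atTop
          (𝓝 (∫⁻ s, min (pg s) (ENNReal.ofReal K) ∂ν)) :=
        tendsto_lintegral_setwise_bounded hsw (hmpg.min measurable_const)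
          ENNReal.ofReal_ne_top (fun s => min_le_right _ _)
      calc atTop.limsup P
          ≤ atTop.limsup (fun n => (∫⁻ s, min (pg s) (ENNReal.ofReal K) ∂μ n)
            + ∫⁻ s in {s | ENNReal.ofReal K ≤ pg s}, pg s ∂μ n) :=
            limsup_le_limsup (Eventually.of_forall hbnd)
        _ ≤ atTop.limsup (fun n => ∫⁻ s, min (pg s) (ENNReal.ofReal K) ∂μ n)
            + atTop.limsup (fun n => ∫⁻ s in {s | ENNReal.ofReal K ≤ pg s}, pg s ∂μ n) :=
            ennreal_limsup_add_le _ _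
        _ ≤ (∫⁻ s, pg s ∂ν)
            + atTop.limsup (fun n => ∫⁻ s in {s | ENNReal.ofReal K ≤ pg s}, pg s ∂μ n) := by
            gcongr
            rw [hconv.limsup_eq]
            exact lintegral_mono fun s => min_le_left _ _
    have htendsto : Tendsto (fun K : ℝ => (∫⁻ s, pg s ∂ν) +
        atTop.limsup (fun n => ∫⁻ s in {s | ENNReal.ofReal K ≤ pg s}, pg s ∂μ n)) atTop
        (𝓝 ((∫⁻ s, pg s ∂ν) + 0)) := tendsto_const_nhds.add haux₂
    rw [add_zero] at htendsto
    refine ge_of_tendsto htendsto ?_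
    filter_upwards [eventually_ge_atTop (0 : ℝ)] with K hK
    exact key K hK
  have hP : Tendsto P atTop (𝓝 (∫⁻ s, pg s ∂ν)) :=
    tendsto_of_le_liminf_of_limsup_le hPliminf hPlimsup
  have hN : Tendsto N atTop (𝓝 (∫⁻ s, qg s ∂ν)) :=
    tendsto_of_le_liminf_of_limsup_le hNliminf hNlimsup
  -- assemble the EReal convergence
  have hPE : Tendsto (fun n => ((P n : ℝ≥0∞) : EReal)) atTop
      (𝓝 ((∫⁻ s, pg s ∂ν : ℝ≥0∞) : EReal)) := EReal.tendsto_coe_ennreal.2 hP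
  have hNE : Tendsto (fun n => (-((N n : ℝ≥0∞) : EReal))) atTop
      (𝓝 (-((∫⁻ s, qg s ∂ν : ℝ≥0∞) : EReal))) := (EReal.tendsto_coe_ennreal.2 hN).neg
  have hadd : ContinuousAt (fun r : EReal × EReal => r.1 + r.2)
      (((∫⁻ s, pg s ∂ν : ℝ≥0∞) : EReal), -((∫⁻ s, qg s ∂ν : ℝ≥0∞) : EReal)) := by
    refine EReal.continuousAt_add (Or.inr ?_) (Or.inl ?_)
    · simp only [ne_eq, EReal.neg_eq_bot_iff, EReal.coe_ennreal_eq_top_iff]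
      exact hqgfin
    · exact fun h => (EReal.coe_ennreal_ne_bot _) h
  have hfinal := hadd.tendsto.comp (hPE.prodMk_nhds hNE)
  simp only [eIntegral, sub_eq_add_neg]
  exact hfinal
end
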